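/- For |q|<1, |p|<1, |x|<1, |y|<1 and q^a ≠ 1, q^d ≠ 1, the bibasic Humbert function Ψ₁ satisfies the contiguous relation: Ψ₁(q^{a+1},p^b;p^c,q^d;q,p,x,y) = Ψ₁(q^a,p^b;p^c,q^d;q,p,x,y) + (q^a x/(1-q^d))·Ψ₁(q^{a+1},p^b;p^c,q^{d+1};q,p,x,y) + (q^a/(1-q^a))·Ψ₁(q^a,p^b;p^c,q^d;q,p,qx,y) − (q^a/(1-q^a))·Ψ₁(q^a,p^b;p^c,q^d;q,p,qx,qy). -/

import Mathlib

open scoped BigOperators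
open Filter

/-- q-shifted factorial `(z;q)_k`. -/
noncomputable def qPoch (q z : ℂ) (k : ℕ) : ℂ :=
  ∏ r ∈ Finset.range k, (1 - z * q ^ r)

/-- infinite q-shifted factorial `(z;q)_∞`. -/
noncomputable def qPochInf (q z : ℂ) : ℂ := ∏' r : ℕ, (1 - z * q ^ r)

/-- bibasic Humbert function `Ψ₁(A,B;C,D;q,p,x,y)` with `A=qᵃ, B=pᵇ, C=pᶜ, D=q^d`. -/
noncomputable def Psi1 (q p A B C D x y : ℂ) : ℂ :=
  ∑' kl : ℕ × ℕ,
    qPoch q A (kl.1 + kl.2) * qPoch p B kl.2 /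
      (qPoch p C kl.2 * qPoch q D kl.1 * qPoch q q kl.1 * qPoch p p kl.2) *
      x ^ kl.1 * y ^ kl.2

/-- bibasic Humbert function `Ψ₂(A;B,C;q,p,x,y)` with `A=qᵃ, B=pᵇ, C=qᶜ`. -/
noncomputable def Psi2 (q p A B C x y : ℂ) : ℂ :=
  ∑' kl : ℕ × ℕ,
    qPoch q A (kl.1 + kl.2) /
      (qPoch p B kl.2 * qPoch q C kl.1 * qPoch q q kl.1 * qPoch p p kl.2) *
      x ^ kl.1 * y ^ kl.2

/-- the q-difference operator `D_{x,q}`. -/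
noncomputable def qDiff (q : ℂ) (f : ℂ → ℂ) : ℂ → ℂ :=
  fun x => (f x - f (q * x)) / ((1 - q) * x)

/-- basic hypergeometric series `₂φ₁(A,B;C;q,x)`. -/
noncomputable def phi21 (q A B C x : ℂ) : ℂ :=
  ∑' k : ℕ, qPoch q A k * qPoch q B k / (qPoch q C k * qPoch q q k) * x ^ k

/-- basic confluent hypergeometric series `₁φ₁(A;C;q,z)`. -/
noncomputable def phi11 (q A C z : ℂ) : ℂ :=
  ∑' k : ℕ, qPoch q A k / (qPoch q C k * qPoch q q k) *
    (-1) ^ k * q ^ (k * (k - 1) / 2) * z ^ k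

lemma qPoch_zero (q z : ℂ) : qPoch q z 0 = 1 := by simp [qPoch]

lemma qPoch_succ (q z : ℂ) (k : ℕ) : qPoch q z (k+1) = qPoch q z k * (1 - z * q ^ k) := by
  simp [qPoch, Finset.prod_range_succ]

lemma qPoch_succ_left (q z : ℂ) (k : ℕ) : qPoch q z (k+1) = (1 - z) * qPoch q (z*q) k := by
  rw [qPoch, Finset.prod_range_succ', qPoch, mul_comm]
  congr 1
  · simp
  · exact Finset.prod_congr rfl fun r _ => by rw [pow_succ]; ring

lemma qPoch_self_ne_zero (q : ℂ) (hq : ‖q‖ < 1) (k : ℕ) : qPoch q q k ≠ 0 := by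
  rw [qPoch, Finset.prod_ne_zero_iff]
  intro r _
  have h : ‖q * q ^ r‖ < 1 := by
    calc ‖q * q ^ r‖ = ‖q‖ * ‖q‖ ^ r := by rw [norm_mul, norm_pow]
    _ ≤ ‖q‖ * 1 := by
        apply mul_le_mul_of_nonneg_left _ (norm_nonneg q)
        exact pow_le_one₀ (norm_nonneg q) hq.le
    _ < 1 := by simpa using hq
  intro h0
  have : q * q ^ r = 1 := by linear_combination -h0
  rw [this] at h; simp at h

lemma one_sub_pow_ne_zero (q : ℂ) (hq : ‖q‖ < 1) (k : ℕ) : (1 : ℂ) - q ^ (k+1) ≠ 0 := by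
  intro h0
  have h1 : q ^ (k+1) = 1 := by linear_combination -h0
  have h : ‖q ^ (k+1)‖ < 1 := by
    rw [norm_pow]
    calc ‖q‖ ^ (k+1) ≤ ‖q‖ * 1 := by
          rw [pow_succ, mul_comm]
          exact mul_le_mul_of_nonneg_left (pow_le_one₀ (norm_nonneg q) hq.le) (norm_nonneg q)
    _ < 1 := by simpa using hq
  rw [h1] at h; simp at h

lemma exp_neg_two_le (t : ℝ) (h0 : 0 ≤ t) (h : t ≤ 1/2) : Real.exp (-(2*t)) ≤ 1 - t := by
  have h1 : (1:ℝ) + 2*t ≤ Real.exp (2*t) := by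
    have := Real.add_one_le_exp (2*t); linarith
  have h2 : Real.exp (-(2*t)) * Real.exp (2*t) = 1 := by
    rw [← Real.exp_add]; simp
  nlinarith [Real.exp_pos (2*t), Real.exp_pos (-(2*t)),
    mul_le_mul_of_nonneg_left h1 (by linarith : (0:ℝ) ≤ 1 - t)]

lemma geom_sum_bound (r : ℝ) (h0 : 0 ≤ r) (h1 : r < 1) (n : ℕ) :
    ∑ i ∈ Finset.range n, r ^ i ≤ (1 - r)⁻¹ := by
  have hs : Summable fun i : ℕ => r ^ i := summable_geometric_of_lt_one h0 h1
  calc ∑ i ∈ Finset.range n, r ^ i ≤ ∑' i : ℕ, r ^ i :=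
        Summable.sum_le_tsum _ (fun i _ => pow_nonneg h0 i) hs
  _ = (1 - r)⁻¹ := tsum_geometric_of_lt_one h0 h1

lemma norm_qPoch_le (q z : ℂ) (hq : ‖q‖ < 1) (k : ℕ) :
    ‖qPoch q z k‖ ≤ Real.exp (‖z‖ * (1 - ‖q‖)⁻¹) := by
  have hq1 : (0:ℝ) < 1 - ‖q‖ := by linarith
  calc ‖qPoch q z k‖ = ∏ r ∈ Finset.range k, ‖1 - z * q ^ r‖ := by
        rw [qPoch]; exact norm_prod _ _
  _ ≤ ∏ r ∈ Finset.range k, Real.exp (‖z‖ * ‖q‖ ^ r) := by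
      apply Finset.prod_le_prod (fun r _ => norm_nonneg _)
      intro r _
      calc ‖1 - z * q ^ r‖ ≤ ‖(1:ℂ)‖ + ‖z * q ^ r‖ := norm_sub_le _ _
      _ = 1 + ‖z‖ * ‖q‖ ^ r := by rw [norm_one, norm_mul, norm_pow]
      _ ≤ Real.exp (‖z‖ * ‖q‖ ^ r) := by
          have := Real.add_one_le_exp (‖z‖ * ‖q‖ ^ r); linarith
  _ = Real.exp (∑ r ∈ Finset.range k, ‖z‖ * ‖q‖ ^ r) := (Real.exp_sum _ _).symm
  _ ≤ Real.exp (‖z‖ * (1 - ‖q‖)⁻¹) := by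
      apply Real.exp_le_exp.mpr
      rw [← Finset.mul_sum]
      apply mul_le_mul_of_nonneg_left _ (norm_nonneg z)
      exact geom_sum_bound _ (norm_nonneg q) hq k

lemma exists_qPoch_lower (q z : ℂ) (hq : ‖q‖ < 1) :
    ∃ m : ℝ, 0 < m ∧ ∀ k, qPoch q z k = 0 ∨ m ≤ ‖qPoch q z k‖ := by
  have htend : Filter.Tendsto (fun r : ℕ => ‖z‖ * ‖q‖ ^ r) Filter.atTop (nhds 0) := by
    have := tendsto_pow_atTop_nhds_zero_of_lt_one (norm_nonneg q) hq
    simpa using this.const_mul ‖z‖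
  have hev : ∀ᶠ r in Filter.atTop, ‖z‖ * ‖q‖ ^ r ≤ 1/2 :=
    htend.eventually_le_const (by norm_num)
  obtain ⟨r0, hr0⟩ := Filter.eventually_atTop.mp hev
  set f : ℕ → ℝ := fun j => if qPoch q z j = 0 then 1 else ‖qPoch q z j‖ with hf
  have hne : (Finset.range (r0+1)).Nonempty := ⟨0, by simp⟩
  set m1 : ℝ := (Finset.range (r0+1)).inf' hne f with hm1def
  have hm1 : 0 < m1 := by
    rw [hm1def, Finset.lt_inf'_iff]
    intro j _
    by_cases h : qPoch q z j = 0
    · simp [hf, h]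
    · simp only [hf, if_neg h]; exact norm_pos_iff.mpr h
  set T : ℝ := ‖z‖ * (1 - ‖q‖)⁻¹ with hT
  set ε : ℝ := Real.exp (-(2*T)) with hε
  have hεpos : 0 < ε := Real.exp_pos _
  have hε1 : ε ≤ 1 := by
    rw [hε]
    apply Real.exp_le_one_iff.mpr
    have h01 : (0:ℝ) < 1 - ‖q‖ := by linarith
    have : 0 ≤ T := mul_nonneg (norm_nonneg z) (le_of_lt (inv_pos.mpr h01))
    linarith
  refine ⟨m1 * ε, mul_pos hm1 hεpos, fun k => ?_⟩
  have hm1le : ∀ j ≤ r0, qPoch q z j ≠ 0 → m1 ≤ ‖qPoch q z j‖ := by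
    intro j hj hnz
    have : m1 ≤ f j := Finset.inf'_le f (by simp [Nat.lt_succ_iff, hj])
    simp only [hf, if_neg hnz] at this
    exact this
  rcases le_or_gt k r0 with hk | hk
  · by_cases h : qPoch q z k = 0
    · exact Or.inl h
    · right
      calc m1 * ε ≤ m1 * 1 := mul_le_mul_of_nonneg_left hε1 hm1.le
      _ = m1 := mul_one m1
      _ ≤ ‖qPoch q z k‖ := hm1le k hk h
  · obtain ⟨t, rfl⟩ : ∃ t, k = r0 + t := ⟨k - r0, by omega⟩
    have hsplit : qPoch q z (r0 + t) =
        qPoch q z r0 * ∏ i ∈ Finset.range t, (1 - z * q ^ (r0 + i)) := by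
      rw [qPoch, qPoch, Finset.prod_range_add]
    by_cases h : qPoch q z r0 = 0
    · left; rw [hsplit, h, zero_mul]
    · right
      rw [hsplit, norm_mul]
      have hb1 : m1 ≤ ‖qPoch q z r0‖ := hm1le r0 le_rfl h
      have hb2 : ε ≤ ‖∏ i ∈ Finset.range t, (1 - z * q ^ (r0 + i))‖ := by
        rw [norm_prod]
        have step1 : ∀ i ∈ Finset.range t,
            Real.exp (-(2 * (‖z‖ * ‖q‖ ^ (r0 + i)))) ≤ ‖1 - z * q ^ (r0 + i)‖ := by
          intro i _
          have ht2 : ‖z‖ * ‖q‖ ^ (r0 + i) ≤ 1/2 := hr0 (r0+i) (by omega)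
          have ht0 : 0 ≤ ‖z‖ * ‖q‖ ^ (r0 + i) := by positivity
          calc Real.exp (-(2 * (‖z‖ * ‖q‖ ^ (r0 + i)))) ≤ 1 - ‖z‖ * ‖q‖ ^ (r0 + i) :=
                exp_neg_two_le _ ht0 ht2
          _ ≤ ‖1 - z * q ^ (r0 + i)‖ := by
              have := norm_sub_norm_le (1 : ℂ) (z * q ^ (r0 + i))
              rw [norm_one, norm_mul, norm_pow] at this
              linarith
        calc ε = Real.exp (-(2*T)) := rfl
        _ ≤ Real.exp (∑ i ∈ Finset.range t, -(2 * (‖z‖ * ‖q‖ ^ (r0 + i)))) := by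
            apply Real.exp_le_exp.mpr
            have hsum : ∑ i ∈ Finset.range t, (‖z‖ * ‖q‖ ^ (r0 + i)) ≤ T := by
              have h01 : (0:ℝ) < 1 - ‖q‖ := by linarith
              calc ∑ i ∈ Finset.range t, (‖z‖ * ‖q‖ ^ (r0 + i))
                  ≤ ∑ i ∈ Finset.range t, (‖z‖ * ‖q‖ ^ i) := by
                    apply Finset.sum_le_sum
                    intro i _
                    exact mul_le_mul_of_nonneg_left
                      (pow_le_pow_of_le_one (norm_nonneg q) hq.le (by omega)) (norm_nonneg z)
              _ = ‖z‖ * ∑ i ∈ Finset.range t, ‖q‖ ^ i := (Finset.mul_sum _ _ _).symm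
              _ ≤ T := mul_le_mul_of_nonneg_left
                    (geom_sum_bound _ (norm_nonneg q) hq t) (norm_nonneg z)
            have heq : (∑ i ∈ Finset.range t, -(2 * (‖z‖ * ‖q‖ ^ (r0 + i))))
                = -(2 * ∑ i ∈ Finset.range t, (‖z‖ * ‖q‖ ^ (r0 + i))) := by
              rw [Finset.mul_sum]
              simp
            rw [heq]
            apply neg_le_neg
            linarith
        _ = ∏ i ∈ Finset.range t, Real.exp (-(2 * (‖z‖ * ‖q‖ ^ (r0 + i)))) :=
            Real.exp_sum _ _
        _ ≤ ∏ i ∈ Finset.range t, ‖1 - z * q ^ (r0 + i)‖ :=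
            Finset.prod_le_prod (fun i _ => (Real.exp_pos _).le) step1
      calc m1 * ε ≤ ‖qPoch q z r0‖ * ‖∏ i ∈ Finset.range t, (1 - z * q ^ (r0 + i))‖ :=
        mul_le_mul hb1 hb2 hεpos.le (norm_nonneg _)

lemma summable_psi1 (q p A B C D x y : ℂ) (hq : ‖q‖ < 1) (hp : ‖p‖ < 1)
    (hx : ‖x‖ < 1) (hy : ‖y‖ < 1) :
    Summable (fun kl : ℕ × ℕ =>
      qPoch q A (kl.1 + kl.2) * qPoch p B kl.2 /
        (qPoch p C kl.2 * qPoch q D kl.1 * qPoch q q kl.1 * qPoch p p kl.2) *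
        x ^ kl.1 * y ^ kl.2) := by
  obtain ⟨mC, hmC, hC⟩ := exists_qPoch_lower p C hp
  obtain ⟨mD, hmD, hD⟩ := exists_qPoch_lower q D hq
  obtain ⟨mq, hmq, hqq⟩ := exists_qPoch_lower q q hq
  obtain ⟨mp, hmp, hpp⟩ := exists_qPoch_lower p p hp
  set MA : ℝ := Real.exp (‖A‖ * (1 - ‖q‖)⁻¹) with hMA
  set MB : ℝ := Real.exp (‖B‖ * (1 - ‖p‖)⁻¹) with hMB
  set K : ℝ := MA * MB / (mC * mD * mq * mp) with hK
  have hKpos : 0 < K := by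
    apply div_pos (mul_pos (Real.exp_pos _) (Real.exp_pos _))
    positivity
  have hbound : ∀ kl : ℕ × ℕ,
      ‖qPoch q A (kl.1 + kl.2) * qPoch p B kl.2 /
        (qPoch p C kl.2 * qPoch q D kl.1 * qPoch q q kl.1 * qPoch p p kl.2) *
        x ^ kl.1 * y ^ kl.2‖ ≤ K * (‖x‖ ^ kl.1 * ‖y‖ ^ kl.2) := by
    intro ⟨k, l⟩
    have hxy : (0:ℝ) ≤ ‖x‖ ^ k * ‖y‖ ^ l := by positivity
    have main : ‖qPoch q A (k + l) * qPoch p B l‖ /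
        ‖qPoch p C l * qPoch q D k * qPoch q q k * qPoch p p l‖ ≤ K := by
      by_cases hden : qPoch p C l * qPoch q D k * qPoch q q k * qPoch p p l = 0
      · rw [hden, norm_zero, div_zero]; exact hKpos.le
      · have h1 : qPoch p C l ≠ 0 := fun h => hden (by rw [h]; ring)
        have h2 : qPoch q D k ≠ 0 := fun h => hden (by rw [h]; ring)
        have h3 : qPoch q q k ≠ 0 := fun h => hden (by rw [h]; ring)
        have h4 : qPoch p p l ≠ 0 := fun h => hden (by rw [h]; ring)
        have lb : mC * mD * mq * mp ≤
            ‖qPoch p C l * qPoch q D k * qPoch q q k * qPoch p p l‖ := by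
          rw [norm_mul, norm_mul, norm_mul]
          have b1 := (hC l).resolve_left h1
          have b2 := (hD k).resolve_left h2
          have b3 := (hqq k).resolve_left h3
          have b4 := (hpp l).resolve_left h4
          have : mC * mD ≤ ‖qPoch p C l‖ * ‖qPoch q D k‖ :=
            mul_le_mul b1 b2 hmD.le (norm_nonneg _)
          have h12 : mC * mD * mq ≤ ‖qPoch p C l‖ * ‖qPoch q D k‖ * ‖qPoch q q k‖ :=
            mul_le_mul this b3 hmq.le (by positivity)
          exact mul_le_mul h12 b4 hmp.le (by positivity)
        have ub : ‖qPoch q A (k + l) * qPoch p B l‖ ≤ MA * MB := by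
          rw [norm_mul]
          exact mul_le_mul (norm_qPoch_le q A hq (k+l)) (norm_qPoch_le p B hp l)
            (norm_nonneg _) (Real.exp_pos _).le
        exact div_le_div₀ (by positivity) ub (by positivity) lb
    calc ‖qPoch q A (k + l) * qPoch p B l /
          (qPoch p C l * qPoch q D k * qPoch q q k * qPoch p p l) * x ^ k * y ^ l‖
        = ‖qPoch q A (k + l) * qPoch p B l‖ /
          ‖qPoch p C l * qPoch q D k * qPoch q q k * qPoch p p l‖ * ‖x‖ ^ k * ‖y‖ ^ l := by
          rw [norm_mul, norm_mul, norm_div, norm_pow, norm_pow]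
    _ ≤ K * ‖x‖ ^ k * ‖y‖ ^ l := by
          apply mul_le_mul_of_nonneg_right _ (pow_nonneg (norm_nonneg y) l)
          exact mul_le_mul_of_nonneg_right main (pow_nonneg (norm_nonneg x) k)
    _ = K * (‖x‖ ^ k * ‖y‖ ^ l) := by ring
  refine Summable.of_norm_bounded ?_ hbound
  have hgx : Summable (fun k : ℕ => ‖x‖ ^ k) := summable_geometric_of_lt_one (norm_nonneg x) hx
  have hgy : Summable (fun l : ℕ => ‖y‖ ^ l) := summable_geometric_of_lt_one (norm_nonneg y) hy
  exact (hgx.mul_of_nonneg hgy (fun k => pow_nonneg (norm_nonneg x) k)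
    (fun l => pow_nonneg (norm_nonneg y) l)).mul_left K

noncomputable def psiTerm (q p A B C D x y : ℂ) (kl : ℕ × ℕ) : ℂ :=
  qPoch q A (kl.1 + kl.2) * qPoch p B kl.2 /
    (qPoch p C kl.2 * qPoch q D kl.1 * qPoch q q kl.1 * qPoch p p kl.2) *
    x ^ kl.1 * y ^ kl.2


lemma hkey (q p u D B C x y : ℂ) (hq : ‖q‖ < 1)
    (hu1 : (1:ℂ) - u ≠ 0) (hD1 : (1:ℂ) - D ≠ 0) (k l : ℕ) :
    psiTerm q p (u*q) B C D x y (k,l) =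
      psiTerm q p u B C D x y (k,l)
      + (if k = 0 then 0 else
          (u * x / (1 - D)) * psiTerm q p (u*q) B C (D*q) x y (k-1, l))
      + (u/(1-u)) * psiTerm q p u B C D (q*x) y (k,l)
      - (u/(1-u)) * psiTerm q p u B C D (q*x) (q*y) (k,l) := by
  have hQ : ∀ j, qPoch q q j ≠ 0 := qPoch_self_ne_zero q hq
  simp only [psiTerm]
  by_cases h1 : qPoch p C l = 0
  · simp [h1]
  by_cases h2 : qPoch p p l = 0
  · simp [h2]
  match k with
  | 0 =>
    have hrel : qPoch q (u*q) l * (1 - u) = qPoch q u l * (1 - u * q ^ l) := by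
      have e1 := qPoch_succ_left q u l
      have e2 := qPoch_succ q u l
      linear_combination e2 - e1
    simp only [qPoch_zero, if_pos rfl, eq_self_iff_true, if_true, pow_zero, mul_one, one_mul, Nat.zero_add, zero_add,
      mul_pow, div_eq_mul_inv, mul_inv]
    linear_combination
      ((1-u)⁻¹ * qPoch p B l * (qPoch p C l)⁻¹ * (qPoch p p l)⁻¹ * y ^ l) * hrel +
      ((qPoch q u l - qPoch q (u*q) l) * qPoch p B l * (qPoch p C l)⁻¹ * (qPoch p p l)⁻¹
        * y ^ l) * (mul_inv_cancel₀ hu1)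
  | (k+1) =>
    have hidx : k + 1 + l = (k + l) + 1 := by omega
    by_cases h3 : qPoch q (D*q) k = 0
    · have h4 : qPoch q D (k+1) = 0 := by rw [qPoch_succ_left, h3, mul_zero]
      simp [h3, h4]
    · have h4 : qPoch q D (k+1) = (1 - D) * qPoch q (D*q) k := qPoch_succ_left q D k
      have h5 : qPoch q q (k+1) = qPoch q q k * (1 - q * q ^ k) := qPoch_succ q q k
      have h6 : qPoch q (u*q) (k+1+l) = qPoch q (u*q) (k+l) * (1 - (u*q) * q ^ (k+l)) := by
        rw [hidx]; exact qPoch_succ q (u*q) (k+l)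
      have h7 : qPoch q u (k+1+l) = (1 - u) * qPoch q (u*q) (k+l) := by
        rw [hidx]; exact qPoch_succ_left q u (k+l)
      have h8 : (1:ℂ) - q * q ^ k ≠ 0 := by
        have := one_sub_pow_ne_zero q hq k
        rwa [pow_succ, mul_comm (q ^ k) q] at this
      simp only [if_neg (Nat.succ_ne_zero k), Nat.add_sub_cancel]
      rw [h4, h5, h6, h7]
      simp only [mul_pow, div_eq_mul_inv, mul_inv]
      have hiu : (1-u) * (1-u)⁻¹ = 1 := mul_inv_cancel₀ hu1
      have his : (1 - q*q^k) * (1 - q*q^k)⁻¹ = 1 := mul_inv_cancel₀ h8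
      set X := qPoch q (u*q) (k+l)
      set G := qPoch q (D*q) k
      set Q := qPoch q q k
      set bP := qPoch p B l
      set cP := qPoch p C l
      set pP := qPoch p p l
      set P := X * bP * cP⁻¹ * pP⁻¹ * y ^ l with hP
      linear_combination
        (P * x^(k+1) * (1-D)⁻¹ * G⁻¹ * Q⁻¹ * u) * his +
        (P * x^(k+1) * (1-D)⁻¹ * G⁻¹ * Q⁻¹ * u * q * q^k * (1 - q*q^k)⁻¹ * (q^l - 1)) * hiu

lemma summable_psiTerm (q p A B C D x y : ℂ) (hq : ‖q‖ < 1) (hp : ‖p‖ < 1)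
    (hx : ‖x‖ < 1) (hy : ‖y‖ < 1) :
    Summable (psiTerm q p A B C D x y) :=
  summable_psi1 q p A B C D x y hq hp hx hy

lemma Psi1_eq_tsum (q p A B C D x y : ℂ) :
    Psi1 q p A B C D x y = ∑' kl : ℕ × ℕ, psiTerm q p A B C D x y kl := rfl

theorem stmt0 (q p a b c d x y : ℂ)
    (hq0 : 0 < ‖q‖) (hq1 : ‖q‖ < 1)
    (hp0 : 0 < ‖p‖) (hp1 : ‖p‖ < 1)
    (hx : ‖x‖ < 1) (hy : ‖y‖ < 1)
    (ha : q ^ a ≠ 1) (hd : q ^ d ≠ 1) :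
    Psi1 q p (q ^ (a + 1)) (p ^ b) (p ^ c) (q ^ d) x y =
      Psi1 q p (q ^ a) (p ^ b) (p ^ c) (q ^ d) x y +
        q ^ a * x / (1 - q ^ d) *
          Psi1 q p (q ^ (a + 1)) (p ^ b) (p ^ c) (q ^ (d + 1)) x y +
        q ^ a / (1 - q ^ a) *
          Psi1 q p (q ^ a) (p ^ b) (p ^ c) (q ^ d) (q * x) y -
        q ^ a / (1 - q ^ a) *
          Psi1 q p (q ^ a) (p ^ b) (p ^ c) (q ^ d) (q * x) (q * y) := by
  have hq1' : ‖q‖ < 1 := by exact hq1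
  have hp1' : ‖p‖ < 1 := by exact hp1
  have hx' : ‖x‖ < 1 := by exact hx
  have hy' : ‖y‖ < 1 := by exact hy
  have hqne : q ≠ 0 := by
    intro h; rw [h] at hq0; simp at hq0
  have hqx : ‖q * x‖ < 1 := by
    rw [norm_mul]; nlinarith [norm_nonneg q, norm_nonneg x]
  have hqy : ‖q * y‖ < 1 := by
    rw [norm_mul]; nlinarith [norm_nonneg q, norm_nonneg y]
  have hA1 : q ^ (a + 1) = q ^ a * q := by
    rw [Complex.cpow_add _ _ hqne, Complex.cpow_one]
  have hDd1 : q ^ (d + 1) = q ^ d * q := by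
    rw [Complex.cpow_add _ _ hqne, Complex.cpow_one]
  have hu1 : (1:ℂ) - q ^ a ≠ 0 := sub_ne_zero.mpr (Ne.symm ha)
  have hD1' : (1:ℂ) - q ^ d ≠ 0 := sub_ne_zero.mpr (Ne.symm hd)
  rw [hA1, hDd1]
  rw [Psi1_eq_tsum, Psi1_eq_tsum, Psi1_eq_tsum, Psi1_eq_tsum, Psi1_eq_tsum]
  set L : ℕ × ℕ → ℂ := psiTerm q p (q ^ a * q) (p ^ b) (p ^ c) (q ^ d) x y with hL
  set F1 : ℕ × ℕ → ℂ := psiTerm q p (q ^ a) (p ^ b) (p ^ c) (q ^ d) x y with hF1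
  set F2 : ℕ × ℕ → ℂ := psiTerm q p (q ^ a * q) (p ^ b) (p ^ c) (q ^ d * q) x y with hF2
  set F3 : ℕ × ℕ → ℂ := psiTerm q p (q ^ a) (p ^ b) (p ^ c) (q ^ d) (q * x) y with hF3
  set F4 : ℕ × ℕ → ℂ := psiTerm q p (q ^ a) (p ^ b) (p ^ c) (q ^ d) (q * x) (q * y)
    with hF4
  set C2 : ℂ := q ^ a * x / (1 - q ^ d) with hC2
  set C3 : ℂ := q ^ a / (1 - q ^ a) with hC3
  set G2 : ℕ × ℕ → ℂ := fun kl =>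
    if kl.1 = 0 then 0 else C2 * F2 (kl.1 - 1, kl.2) with hG2def
  have hkeyd : ∀ kl : ℕ × ℕ, L kl = F1 kl + G2 kl + C3 * F3 kl - C3 * F4 kl := by
    rintro ⟨k, l⟩
    exact hkey q p (q ^ a) (q ^ d) (p ^ b) (p ^ c) x y hq1' hu1 hD1' k l
  have hsumL : Summable L := summable_psiTerm _ _ _ _ _ _ _ _ hq1' hp1' hx' hy'
  have hsum1 : Summable F1 := summable_psiTerm _ _ _ _ _ _ _ _ hq1' hp1' hx' hy'
  have hsum2 : Summable F2 := summable_psiTerm _ _ _ _ _ _ _ _ hq1' hp1' hx' hy'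
  have hsum3 : Summable F3 := summable_psiTerm _ _ _ _ _ _ _ _ hq1' hp1' hqx hy'
  have hsum4 : Summable F4 := summable_psiTerm _ _ _ _ _ _ _ _ hq1' hp1' hqx hqy
  have hsumG2 : Summable G2 := by
    have heq : ∀ kl, G2 kl = L kl - F1 kl - C3 * F3 kl + C3 * F4 kl := by
      intro kl; linear_combination -hkeyd kl
    exact (((hsumL.sub hsum1).sub (hsum3.mul_left C3)).add (hsum4.mul_left C3)).congr
      (fun kl => (heq kl).symm)
  have hG2sum : ∑' kl, G2 kl = C2 * ∑' kl, F2 kl := by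
    have hinj : Function.Injective (fun kl : ℕ × ℕ => (kl.1 + 1, kl.2)) := by
      rintro ⟨k1, l1⟩ ⟨k2, l2⟩ h
      simp only [Prod.mk.injEq] at h
      exact Prod.ext (by omega) h.2
    have hzero : Function.support G2 ⊆ Set.range (fun kl : ℕ × ℕ => (kl.1 + 1, kl.2)) := by
      rintro ⟨k, l⟩ hkl
      match k with
      | 0 => exact absurd (by simp [hG2def]) hkl
      | (k+1) => exact ⟨(k, l), rfl⟩
    have h1 := Function.Injective.tsum_eq hinj (f := G2) hzero
    rw [← h1]
    have h2 : ∀ kl : ℕ × ℕ, G2 (kl.1 + 1, kl.2) = C2 * F2 kl := by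
      rintro ⟨k, l⟩; simp [hG2def]
    rw [tsum_congr h2, tsum_mul_left]
  have key : ∑' kl, L kl = ∑' kl, F1 kl + ∑' kl, G2 kl + C3 * ∑' kl, F3 kl
      - C3 * ∑' kl, F4 kl := by
    rw [tsum_congr hkeyd]
    rw [Summable.tsum_sub ((hsum1.add hsumG2).add (hsum3.mul_left C3)) (hsum4.mul_left C3)]
    rw [Summable.tsum_add (hsum1.add hsumG2) (hsum3.mul_left C3)]
    rw [Summable.tsum_add hsum1 hsumG2]
    rw [tsum_mul_left, tsum_mul_left]
  rw [key, hG2sum]
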